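/- Let 0 < λ' < λ and let 0 ≤ i < j ≤ K_λ with ‖Y − (PY)_j‖ > 0. If ‖Y − (PY)_j‖²/(nm − λj) ≤ ‖Y − (PY)_i‖²/(nm − λi), then ‖Y − (PY)_j‖²/(nm − λ'j) < ‖Y − (PY)_i‖²/(nm − λ'i). Consequently, the selected ranks are monotone in the tuning parameter: if k̂_λ := Σ_{k=1}^{K_λ} 1{d_k²(PY) ≥ λ‖Y−(PY)_k‖²/(nm−λk)} and k̂_{λ'} is defined analogously with λ', then k̂_λ ≤ k̂_{λ'}. -/

import Mathlib

open scoped BigOperators NNReal ENNReal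
open Classical MeasureTheory ProbabilityTheory

noncomputable section

/-- Squared Frobenius (Hilbert–Schmidt) norm of a real matrix. -/
def frob2 {n m : ℕ} (M : Matrix (Fin n) (Fin m) ℝ) : ℝ :=
  ∑ i, ∑ j, (M i j) ^ 2

/-- `sval M k` is the `k`-th largest singular value of `M` (1-based indexing),
i.e. the square root of the `k`-th largest eigenvalue of `Mᴴ * M`; by convention
it is `0` for `k = 0` and for `k > m`. -/
def sval {n m : ℕ} (M : Matrix (Fin n) (Fin m) ℝ) (k : ℕ) : ℝ :=
  if h : 1 ≤ k ∧ k ≤ m then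
    Real.sqrt ((Matrix.conjTranspose_eq_transpose_of_trivial M ▸ Matrix.isHermitian_conjTranspose_mul_self M : (M.transpose * M).IsHermitian).eigenvalues
      (Tuple.sort (Matrix.conjTranspose_eq_transpose_of_trivial M ▸ Matrix.isHermitian_conjTranspose_mul_self M : (M.transpose * M).IsHermitian).eigenvalues ⟨m - k, by omega⟩))
  else 0

/-- A best rank-`k` approximation of `M` in Frobenius norm (rank-`k` truncated SVD),
with the convention that the rank-`0` truncation is `0`. -/
def trunc {n m : ℕ} (M : Matrix (Fin n) (Fin m) ℝ) (k : ℕ) :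
    Matrix (Fin n) (Fin m) ℝ :=
  if k = 0 then 0
  else Classical.epsilon fun B : Matrix (Fin n) (Fin m) ℝ =>
    B.rank ≤ k ∧ ∀ C : Matrix (Fin n) (Fin m) ℝ, C.rank ≤ k → frob2 (M - B) ≤ frob2 (M - C)

/-- `K_λ = ⌊(nm-1)/λ⌋ ∧ q ∧ m`. -/
def Kfun (n m q : ℕ) (lam : ℝ) : ℕ :=
  min (min (Nat.floor ((((n * m : ℕ) : ℝ) - 1) / lam)) q) m

/-- `σ̂_k² = ‖Y - (PY)_k‖² / (nm - λ k)`. -/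
def sighat2 {n m : ℕ} (Y : Matrix (Fin n) (Fin m) ℝ)
    (P : Matrix (Fin n) (Fin n) ℝ) (lam : ℝ) (k : ℕ) : ℝ :=
  frob2 (Y - trunc (P * Y) k) / (((n * m : ℕ) : ℝ) - lam * k)

/-- The selected rank `k̂ = ∑_{k=1}^{K_λ} 1{d_k²(PY) ≥ λ σ̂_k²}`,
which minimizes `σ̂_k²` over `{0, 1, …, K_λ}`. -/
def khat {n m : ℕ} (Y : Matrix (Fin n) (Fin m) ℝ)
    (P : Matrix (Fin n) (Fin n) ℝ) (q : ℕ) (lam : ℝ) : ℕ :=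
  ∑ k ∈ Finset.Icc 1 (Kfun n m q lam),
    if lam * sighat2 Y P lam k ≤ (sval (P * Y) k) ^ 2 then 1 else 0


lemma frob2_nonneg {n m : ℕ} (M : Matrix (Fin n) (Fin m) ℝ) : 0 ≤ frob2 M := by
  apply Finset.sum_nonneg; intro i _
  apply Finset.sum_nonneg; intro j _
  positivity

lemma lam_mul_le {n m q : ℕ} {lam : ℝ} (hlam : 0 < lam) {k : ℕ}
    (hk1 : 1 ≤ k) (hkK : k ≤ Kfun n m q lam) :
    lam * k ≤ ((n * m : ℕ) : ℝ) - 1 := by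
  have h1 : k ≤ Nat.floor ((((n * m : ℕ) : ℝ) - 1) / lam) := by
    have := hkK
    simp only [Kfun, le_min_iff, min_le_iff] at this ⊢
    omega
  have h2 : (k : ℝ) ≤ (((n * m : ℕ) : ℝ) - 1) / lam :=
    (Nat.le_floor_iff' (by omega)).mp h1
  rw [le_div_iff₀ hlam] at h2
  linarith [h2]

lemma Kfun_mono {n m q : ℕ} {lam lam' : ℝ} (h0 : 0 < lam') (h1 : lam' ≤ lam) :
    Kfun n m q lam ≤ Kfun n m q lam' := by
  have hfl : Nat.floor ((((n * m : ℕ) : ℝ) - 1) / lam)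
      ≤ Nat.floor ((((n * m : ℕ) : ℝ) - 1) / lam') := by
    rcases le_or_gt 0 (((n * m : ℕ) : ℝ) - 1) with hx | hx
    · apply Nat.floor_le_floor
      gcongr
    · rw [Nat.floor_of_nonpos (div_nonpos_iff.mpr (Or.inr ⟨hx.le, by linarith⟩))]
      exact Nat.zero_le _
  simp only [Kfun, le_min_iff, min_le_iff]
  omega

set_option maxHeartbeats 1000000 in
theorem statement_11
    {n m p q : ℕ}
    (X : Matrix (Fin n) (Fin p) ℝ) (A : Matrix (Fin p) (Fin m) ℝ)
    (E Y : Matrix (Fin n) (Fin m) ℝ)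
    (P : Matrix (Fin n) (Fin n) ℝ)
    (hY : Y = X * A + E)
    (hP2 : P * P = P) (hPt : P.transpose = P) (hPX : P * X = X)
    (hq : X.rank = q) (hPq : P.rank = q)
    (lam : ℝ) (hlam : 0 < lam)
    (lam' : ℝ) (hlam'0 : 0 < lam') (hlam' : lam' < lam)
    (i j : ℕ) (hij : i < j) (hjK : j ≤ Kfun n m q lam)
    (hpos : 0 < frob2 (Y - trunc (P * Y) j)) :
    ((frob2 (Y - trunc (P * Y) j) / (((n * m : ℕ) : ℝ) - lam * j) ≤
        frob2 (Y - trunc (P * Y) i) / (((n * m : ℕ) : ℝ) - lam * i) →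
      frob2 (Y - trunc (P * Y) j) / (((n * m : ℕ) : ℝ) - lam' * j) <
        frob2 (Y - trunc (P * Y) i) / (((n * m : ℕ) : ℝ) - lam' * i)) ∧
    khat Y P q lam ≤ khat Y P q lam') := by
  have hN0 : (0:ℝ) ≤ ((n * m : ℕ) : ℝ) := Nat.cast_nonneg _
  constructor
  · intro h
    have hj1 : 1 ≤ j := by omega
    have hlamj : lam * j ≤ ((n * m : ℕ) : ℝ) - 1 := lam_mul_le hlam hj1 hjK
    have hij' : (i : ℝ) < (j : ℝ) := by exact_mod_cast hij
    have hi0 : (0:ℝ) ≤ (i : ℝ) := Nat.cast_nonneg _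
    have hDj : (0:ℝ) < ((n * m : ℕ) : ℝ) - lam * j := by linarith
    have hDi : (0:ℝ) < ((n * m : ℕ) : ℝ) - lam * i := by nlinarith
    have hD'j : (0:ℝ) < ((n * m : ℕ) : ℝ) - lam' * j := by nlinarith
    have hD'i : (0:ℝ) < ((n * m : ℕ) : ℝ) - lam' * i := by nlinarith
    rw [div_le_div_iff₀ hDj hDi] at h
    rw [div_lt_div_iff₀ hD'j hD'i]
    set a := frob2 (Y - trunc (P * Y) j) with ha
    set b := frob2 (Y - trunc (P * Y) i) with hb
    clear_value a b
    clear ha hb hY hP2 hPt hPX hq hPq hjK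
    clear X A E Y P
    have hlamij : lam * i ≤ lam * j := mul_le_mul_of_nonneg_left hij'.le hlam.le
    have hbpos : 0 < b := by nlinarith [mul_pos hpos hDi]
    have hab : a ≤ b := by
      nlinarith [mul_le_mul_of_nonneg_left (show ((n * m : ℕ) : ℝ) - lam * j ≤
        ((n * m : ℕ) : ℝ) - lam * i from by linarith) hpos.le]
    linarith [mul_le_mul_of_nonneg_right hab (mul_nonneg (by linarith : (0:ℝ) ≤ lam - lam') hi0),
      mul_lt_mul_of_pos_left hij' (mul_pos hbpos (by linarith : (0:ℝ) < lam - lam')), h]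
  · unfold khat
    have hK : Kfun n m q lam ≤ Kfun n m q lam' := Kfun_mono hlam'0 hlam'.le
    calc (∑ k ∈ Finset.Icc 1 (Kfun n m q lam),
            if lam * sighat2 Y P lam k ≤ (sval (P * Y) k) ^ 2 then 1 else 0)
        ≤ ∑ k ∈ Finset.Icc 1 (Kfun n m q lam),
            if lam' * sighat2 Y P lam' k ≤ (sval (P * Y) k) ^ 2 then 1 else 0 := by
          apply Finset.sum_le_sum
          intro k hk
          rw [Finset.mem_Icc] at hk
          have hk1 : 1 ≤ k := hk.1
          have hlamk : lam * k ≤ ((n * m : ℕ) : ℝ) - 1 := lam_mul_le hlam hk1 hk.2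
          have hk0 : (0:ℝ) ≤ (k : ℝ) := Nat.cast_nonneg _
          have hDk : (0:ℝ) < ((n * m : ℕ) : ℝ) - lam * k := by linarith
          have hD'k : (0:ℝ) < ((n * m : ℕ) : ℝ) - lam' * k := by nlinarith
          have hc : 0 ≤ frob2 (Y - trunc (P * Y) k) := frob2_nonneg _
          have key : lam' * sighat2 Y P lam' k ≤ lam * sighat2 Y P lam k := by
            unfold sighat2
            set c := frob2 (Y - trunc (P * Y) k) with hcdef
            clear_value c
            rw [← mul_div_assoc, ← mul_div_assoc, div_le_div_iff₀ hD'k hDk]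
            nlinarith [mul_nonneg (mul_nonneg (by linarith : (0:ℝ) ≤ lam - lam') hc) hN0]
          split_ifs with h1 h2
          · exact le_refl 1
          · exact absurd (le_trans key h1) h2
          · exact Nat.zero_le _
          · exact le_refl 0
      _ ≤ ∑ k ∈ Finset.Icc 1 (Kfun n m q lam'),
            if lam' * sighat2 Y P lam' k ≤ (sval (P * Y) k) ^ 2 then 1 else 0 :=
          Finset.sum_le_sum_of_subset (Finset.Icc_subset_Icc_right hK)

end
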